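/- Let a ≥ 1 be a real number, and consider the three points (0,0), (a,0), (0,1) in the Euclidean plane (the vertices of a right triangle with legs a and 1). Then the infimum over all points X of the plane of d(X,(0,0)) + d(X,(a,0)) + d(X,(0,1)) equals √(a² + a√3 + 1), where d denotes Euclidean distance. -/

import Mathlib

/-- Euclidean distance in the plane. -/
noncomputable def d (X Y : ℝ × ℝ) : ℝ :=
  Real.sqrt ((X.1 - Y.1) ^ 2 + (X.2 - Y.2) ^ 2)

/-- Cauchy–Schwarz in the plane: `u*A + v*B ≤ c * √(A² + B²)` when `u² + v² = c²`. -/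
lemma weber_cs (A B u v c : ℝ) (hc : 0 ≤ c) (huv : u ^ 2 + v ^ 2 = c ^ 2) :
    u * A + v * B ≤ c * Real.sqrt (A ^ 2 + B ^ 2) := by
  have hS : 0 ≤ Real.sqrt (A ^ 2 + B ^ 2) := Real.sqrt_nonneg _
  have hS2 : (Real.sqrt (A ^ 2 + B ^ 2)) ^ 2 = A ^ 2 + B ^ 2 :=
    Real.sq_sqrt (by positivity)
  nlinarith [sq_nonneg (u * B - v * A), sq_nonneg (c * Real.sqrt (A ^ 2 + B ^ 2) - (u * A + v * B)),
    mul_nonneg hc hS]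

/-- For `a ≥ 1`, the infimum of the Weber objective for the vertices
`(0,0)`, `(a,0)`, `(0,1)` of a right triangle with legs `a` and `1`
equals `√(a² + a√3 + 1)`. -/
theorem weber_right_triangle (a : ℝ) (ha : 1 ≤ a) :
    (⨅ X : ℝ × ℝ, d X (0, 0) + d X (a, 0) + d X (0, 1)) =
      Real.sqrt (a ^ 2 + a * Real.sqrt 3 + 1) := by
  have ha0 : (0:ℝ) < a := lt_of_lt_of_le one_pos ha
  set s := Real.sqrt 3 with hs_def
  have hs : s ^ 2 = 3 := Real.sq_sqrt (by norm_num)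
  have hs0 : (0:ℝ) < s := Real.sqrt_pos.mpr (by norm_num)
  set L := Real.sqrt (a ^ 2 + a * s + 1) with hL_def
  have hL : L ^ 2 = a ^ 2 + a * s + 1 := Real.sq_sqrt (by positivity)
  have hL0 : (0:ℝ) < L := Real.sqrt_pos.mpr (by positivity)
  set M : ℝ := 2 * L * (a * s + 1) * (a + s) with hM_def
  have hM0 : (0:ℝ) < M := by positivity
  -- lower bound
  have hlow : ∀ X : ℝ × ℝ, L ≤ d X (0, 0) + d X (a, 0) + d X (0, 1) := by
    rintro ⟨x, y⟩
    simp only [d]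
    have W1 := weber_cs (x - 0) (y - 0)
      ((a + s) ^ 2 * (a * s + 1)) ((a * s + 1) ^ 2 * (a + s)) M hM0.le (by
        rw [hM_def]
        linear_combination (-4*s^2 + -8*a*s + -8*a*s^3 + -4*a^2 + -16*a^2*s^2 + -4*a^2*s^4 +
          -8*a^3*s + -8*a^3*s^3 + -4*a^4*s^2) * hL +
          (s^2 + 2*a*s + 2*a*s^3 + a^2 + 5*a^2*s^2 + a^2*s^4 + 4*a^3*s + 4*a^3*s^3 + a^4 +
          5*a^4*s^2 + a^4*s^4 + 2*a^5*s + 2*a^5*s^3 + a^6*s^2) * hs)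
    have W2 := weber_cs (x - a) (y - 0)
      (-((2*a^2*s + 5*a + s) * (a + s))) ((a * s + 1) * (a + s)) M hM0.le (by
        rw [hM_def]
        linear_combination (-4*s^2 + -8*a*s + -8*a*s^3 + -4*a^2 + -16*a^2*s^2 + -4*a^2*s^4 +
          -8*a^3*s + -8*a^3*s^3 + -4*a^4*s^2) * hL +
          (s^2 + 2*a*s + a^2 + -7*a^2*s^2 + -14*a^3*s + -4*a^3*s^3 + -7*a^4 + -8*a^4*s^2 +
          -4*a^5*s) * hs)
    have W3 := weber_cs (x - 0) (y - 1)
      (a * (a * s + 1) * (a + s)) (-((a^2*s + 5*a + 2*s) * (a * s + 1))) M hM0.le (by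
        rw [hM_def]
        linear_combination (-4*s^2 + -8*a*s + -8*a*s^3 + -4*a^2 + -16*a^2*s^2 + -4*a^2*s^4 +
          -8*a^3*s + -8*a^3*s^3 + -4*a^4*s^2) * hL +
          (-4*a*s + -7*a^2 + -8*a^2*s^2 + -14*a^3*s + -4*a^3*s^3 + a^4 + -7*a^4*s^2 + 2*a^5*s +
          a^6*s^2) * hs)
    have hsum : ((a + s) ^ 2 * (a * s + 1) * (x - 0) + (a * s + 1) ^ 2 * (a + s) * (y - 0)) +
        (-((2*a^2*s + 5*a + s) * (a + s)) * (x - a) + (a * s + 1) * (a + s) * (y - 0)) +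
        (a * (a * s + 1) * (a + s) * (x - 0) + -((a^2*s + 5*a + 2*s) * (a * s + 1)) * (y - 1)) =
        M * L := by
      rw [hM_def]
      linear_combination (-2*s + -2*a + -2*a*s^2 + -2*a^2*s) * hL +
        (-a + a*y + a*s*x + a^2*x + -2*a^2*s + a^2*s*y + -a^3) * hs
    have htot := add_le_add (add_le_add W1 W2) W3
    rw [hsum] at htot
    have h2 : M * L ≤ M * (Real.sqrt ((x - 0) ^ 2 + (y - 0) ^ 2) +
        Real.sqrt ((x - a) ^ 2 + (y - 0) ^ 2) + Real.sqrt ((x - 0) ^ 2 + (y - 1) ^ 2)) := by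
      linarith
    exact le_of_mul_le_mul_left h2 hM0
  -- the Fermat point
  set D : ℝ := a ^ 2 * s + 3 * a + s with hD_def
  have hD0 : (0:ℝ) < D := by positivity
  have hDne : D ≠ 0 := ne_of_gt hD0
  set F : ℝ × ℝ := (a * (a + s) / (2 * D), a * (a * s + 1) / (2 * D)) with hF_def
  have hub : d F (0, 0) + d F (a, 0) + d F (0, 1) = L := by
    have e1 : d F (0, 0) = a * L / D := by
      simp only [d, hF_def]
      rw [show (a * (a + s) / (2 * D) - (0:ℝ)) ^ 2 + (a * (a * s + 1) / (2 * D) - (0:ℝ)) ^ 2 =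
        (a * L / D) ^ 2 by
          field_simp
          rw [hD_def]
          linear_combination (-4*a^2*s^2 + -24*a^3*s + -36*a^4 + -8*a^4*s^2 + -24*a^5*s +
            -4*a^6*s^2) * hL + (a^2*s^2 + 6*a^3*s + 9*a^4 + 3*a^4*s^2 + 12*a^5*s + 9*a^6 +
            3*a^6*s^2 + 6*a^7*s + a^8*s^2) * hs
            + (-4*a^2 + 4*a^2*s^2 + 24*a^3*s + 36*a^4 + 8*a^4*s^2 + 24*a^5*s + 4*a^6*s^2) * hL + (a^2 - a^2*s^2 - 6*a^3*s - 8*a^4 - 3*a^4*s^2 - 12*a^5*s - 9*a^6 - 3*a^6*s^2 - 6*a^7*s - a^8*s^2) * hs]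
      exact Real.sqrt_sq (by positivity)
    have e2 : d F (a, 0) = a * L * (a * s + 1) / D := by
      simp only [d, hF_def]
      rw [show (a * (a + s) / (2 * D) - a) ^ 2 + (a * (a * s + 1) / (2 * D) - (0:ℝ)) ^ 2 =
        (a * L * (a * s + 1) / D) ^ 2 by
          field_simp
          rw [hD_def]
          linear_combination (-4*a^2*s^2 + -24*a^3*s + -8*a^3*s^3 + -36*a^4 + -56*a^4*s^2 +
            -4*a^4*s^4 + -96*a^5*s + -40*a^5*s^3 + -88*a^6*s^2 + -8*a^6*s^4 + -32*a^7*s^3 +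
            -4*a^8*s^4) * hL + (a^2*s^2 + 6*a^3*s + 9*a^4 + -5*a^4*s^2 + -36*a^5*s + -4*a^5*s^3 +
            -63*a^6 + -37*a^6*s^2 + -78*a^7*s + -8*a^7*s^3 + -31*a^8*s^2 + -4*a^9*s^3) * hs
            + (-4*a^2 + 4*a^2*s^2 + 16*a^3*s + 8*a^3*s^3 + 36*a^4 + 52*a^4*s^2 + 4*a^4*s^4 + 96*a^5*s + 40*a^5*s^3 + 88*a^6*s^2 + 8*a^6*s^4 + 32*a^7*s^3 + 4*a^8*s^4) * hL + (a^2 - a^2*s^2 - 6*a^3*s - 16*a^4 + 5*a^4*s^2 + 32*a^5*s + 4*a^5*s^3 + 63*a^6 + 37*a^6*s^2 + 78*a^7*s + 8*a^7*s^3 + 31*a^8*s^2 + 4*a^9*s^3) * hs]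
      exact Real.sqrt_sq (by positivity)
    have e3 : d F (0, 1) = L * (a + s) / D := by
      simp only [d, hF_def]
      rw [show (a * (a + s) / (2 * D) - (0:ℝ)) ^ 2 + (a * (a * s + 1) / (2 * D) - (1:ℝ)) ^ 2 =
        (L * (a + s) / D) ^ 2 by
          field_simp
          rw [hD_def]
          linear_combination (-4*s^4 + -32*a*s^3 + -88*a^2*s^2 + -8*a^2*s^4 + -96*a^3*s +
            -40*a^3*s^3 + -36*a^4 + -56*a^4*s^2 + -4*a^4*s^4 + -24*a^5*s + -8*a^5*s^3 +
            -4*a^6*s^2) * hL + (-4*a*s^3 + -31*a^2*s^2 + -78*a^3*s + -8*a^3*s^3 + -63*a^4 +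
            -37*a^4*s^2 + -36*a^5*s + -4*a^5*s^3 + 9*a^6 + -5*a^6*s^2 + 6*a^7*s + a^8*s^2) * hs
            + (-4*s^2 + 4*s^4 - 8*a*s + 32*a*s^3 - 4*a^2 + 88*a^2*s^2 + 8*a^2*s^4 + 96*a^3*s + 40*a^3*s^3 + 36*a^4 + 56*a^4*s^2 + 4*a^4*s^4 + 24*a^5*s + 8*a^5*s^3 + 4*a^6*s^2) * hL + (-4*a*s + 4*a*s^3 - 7*a^2 + 31*a^2*s^2 + 78*a^3*s + 8*a^3*s^3 + 64*a^4 + 37*a^4*s^2 + 36*a^5*s + 4*a^5*s^3 - 9*a^6 + 5*a^6*s^2 - 6*a^7*s - a^8*s^2) * hs]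
      exact Real.sqrt_sq (by positivity)
    rw [e1, e2, e3, hD_def]
    field_simp
    ring
  -- conclude
  have hbdd : BddBelow (Set.range fun X : ℝ × ℝ => d X (0, 0) + d X (a, 0) + d X (0, 1)) := by
    refine ⟨L, ?_⟩
    rintro v ⟨X, rfl⟩
    exact hlow X
  refine le_antisymm ?_ (le_ciInf hlow)
  exact (ciInf_le hbdd F).trans_eq hub
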